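/- Let F be a homogeneous cubic polynomial in variables z0,z1,z2,z3 over an algebraically closed field k, and let M be a 3×3 matrix of linear forms with det M = c·F for some nonzero c. At every point P of the surface S = {F=0} where not all partial derivatives of F vanish, the matrix M(P) has rank exactly 2. -/
import Mathlib


open MvPolynomial
open Matrix

lemma stmt0_rank_le_one_decomp {k : Type*} [Field k] (A : Matrix (Fin 3) (Fin 3) k)
    (h : A.rank ≤ 1) : ∃ v w : Fin 3 → k, ∀ i j, A i j = w j * v i := by
  rw [Matrix.rank_eq_finrank_span_cols] at h
  obtain ⟨v, hv⟩ := finrank_le_one_iff.mp h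
  refine ⟨(v : Fin 3 → k), fun j =>
    (hv ⟨Aᵀ j, Submodule.subset_span ⟨j, rfl⟩⟩).choose, fun i j => ?_⟩
  have h2 := congrArg (fun x : Submodule.span k (Set.range Aᵀ) => (x : Fin 3 → k) i)
    (hv ⟨Aᵀ j, Submodule.subset_span ⟨j, rfl⟩⟩).choose_spec
  simpa [Matrix.transpose_apply] using h2.symm

lemma stmt0_rank_le_two_of_det_eq_zero {k : Type*} [Field k] (A : Matrix (Fin 3) (Fin 3) k)
    (h : A.det = 0) : A.rank ≤ 2 := by
  obtain ⟨v, hv0, hv⟩ := (Matrix.exists_mulVec_eq_zero_iff).mpr h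
  have hrn := LinearMap.finrank_range_add_finrank_ker A.mulVecLin
  rw [Module.finrank_fin_fun] at hrn
  have hker : 0 < Module.finrank k (LinearMap.ker A.mulVecLin) := by
    rw [pos_iff_ne_zero]
    intro h0
    rw [Submodule.finrank_eq_zero] at h0
    exact hv0 (by simpa [h0, LinearMap.mem_ker] using
      (show v ∈ LinearMap.ker A.mulVecLin by simp [LinearMap.mem_ker, hv]))
  have : A.rank = Module.finrank k (LinearMap.range A.mulVecLin) := rfl
  omega

/-- At every point of the cubic surface `F = 0` where not all partial derivatives of `F`
vanish, a determinantal representation `M` (a 3×3 matrix of linear forms with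
`det M = c·F`, `c ≠ 0`) has rank exactly 2. -/
theorem stmt0 {k : Type*} [Field k] [IsAlgClosed k]
    (F : MvPolynomial (Fin 4) k) (hF : F.IsHomogeneous 3)
    (M : Matrix (Fin 3) (Fin 3) (MvPolynomial (Fin 4) k))
    (hM : ∀ i j, (M i j).IsHomogeneous 1)
    (c : k) (hc : c ≠ 0) (hdet : M.det = C c * F)
    (P : Fin 4 → k) (hP : eval P F = 0)
    (hsm : ∃ i, eval P (pderiv i F) ≠ 0) :
    (M.map (eval P)).rank = 2 := by
  obtain ⟨d, hd⟩ := hsm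
  set A := M.map (eval P) with hA
  have hdetA : A.det = 0 := by
    have h := RingHom.map_det (eval P) M
    rw [hdet, RingHom.mapMatrix_apply] at h
    rw [hA, ← h]
    simp [hP]
  have h2 : A.rank ≤ 2 := stmt0_rank_le_two_of_det_eq_zero A hdetA
  have h1 : ¬ A.rank ≤ 1 := by
    intro hle
    obtain ⟨v, w, hvw'⟩ := stmt0_rank_le_one_decomp A hle
    have hvw : ∀ i j, eval P (M i j) = w j * v i := fun i j => hvw' i j
    have key := congrArg (fun p => eval P (pderiv d p)) hdet
    rw [Matrix.det_fin_three] at key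
    simp only [pderiv_mul, pderiv_C, _root_.map_add, _root_.map_sub, _root_.map_mul,
      eval_C, eval_zero, zero_mul, mul_zero, add_zero, zero_add, hvw] at key
    have h0 : c * eval P (pderiv d F) = 0 := by linear_combination -key
    exact absurd (mul_eq_zero.mp h0) (by push_neg; exact ⟨hc, hd⟩)
  omega
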